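/- Let (S_n) be a stationary Markov chain on a finite alphabet with positive transition matrix Q. Let X = (S_1,...,S_ℓ) and Y = (S_{ℓ-k+1},...,S_{2ℓ-k}) be two overlapping length-ℓ windows, 0 < k < ℓ. Then P(X = Y) ≤ √γ · ρ^{ℓ/2}, where ρ = ρ_max(Q̄) ≤ 1, Q̄ = (q_{ij}²), and γ is the Perron constant. The proof uses Cauchy–Schwarz: P(X=Y) = ∑ p_{i_1}(∏ q)^q(∏' q) ≤ √(∑ p_{i_1}²) · √(∑ (∏ q²)^q (∏' q²)). -/
import Mathlib

open Finset

lemma sum_cons4 (n : ℕ) (F : (Fin (n+1) → Fin 4) → ℝ) :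
    ∑ x : Fin (n+1) → Fin 4, F x = ∑ a : Fin 4, ∑ y : Fin n → Fin 4, F (Fin.cons a y) := by
  rw [← (Fin.consEquiv (fun _ => Fin 4)).sum_comp, Fintype.sum_prod_type]; rfl

lemma sum_snoc4 (n : ℕ) (F : (Fin (n+1) → Fin 4) → ℝ) :
    ∑ x : Fin (n+1) → Fin 4, F x = ∑ a : Fin 4, ∑ y : Fin n → Fin 4, F (Fin.snoc y a) := by
  rw [← (Fin.snocEquiv (fun _ => Fin 4)).sum_comp, Fintype.sum_prod_type]
  simp [Fin.snocEquiv]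

lemma snoc_step (n : ℕ) (M : Matrix (Fin 4) (Fin 4) ℝ) (f : Fin 4 → ℝ)
    (a : Fin 4) (y : Fin (n+1) → Fin 4) :
    f ((Fin.snoc y a : Fin (n+2) → Fin 4) 0)
        * ∏ t : Fin (n+1), M ((Fin.snoc y a : Fin (n+2) → Fin 4) t.succ)
            ((Fin.snoc y a : Fin (n+2) → Fin 4) t.castSucc)
      = f (y 0) * (∏ t : Fin n, M (y t.succ) (y t.castSucc)) * M a (y (Fin.last n)) := by
  rw [Fin.prod_univ_castSucc]
  have h0 : (Fin.snoc y a : Fin (n+2) → Fin 4) 0 = y 0 := by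
    rw [show (0 : Fin (n+2)) = Fin.castSucc 0 from rfl, Fin.snoc_castSucc]
  have h1 : ∀ t : Fin n,
      M ((Fin.snoc y a : Fin (n+2) → Fin 4) (Fin.castSucc t).succ)
          ((Fin.snoc y a : Fin (n+2) → Fin 4) (Fin.castSucc t).castSucc)
        = M (y t.succ) (y t.castSucc) := fun t => by
    rw [Fin.succ_castSucc, Fin.snoc_castSucc, Fin.snoc_castSucc]
  have h2 : M ((Fin.snoc y a : Fin (n+2) → Fin 4) (Fin.last n).succ)
        ((Fin.snoc y a : Fin (n+2) → Fin 4) (Fin.last n).castSucc)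
      = M a (y (Fin.last n)) := by
    rw [Fin.succ_last, Fin.snoc_last, Fin.snoc_castSucc]
  rw [h0, h2, Finset.prod_congr rfl fun t _ => h1 t]
  ring

lemma cons_step (n : ℕ) (M : Matrix (Fin 4) (Fin 4) ℝ) (f : Fin 4 → ℝ)
    (a : Fin 4) (y : Fin (n+1) → Fin 4) :
    f ((Fin.cons a y : Fin (n+2) → Fin 4) 0)
        * ∏ t : Fin (n+1), M ((Fin.cons a y : Fin (n+2) → Fin 4) t.succ)
            ((Fin.cons a y : Fin (n+2) → Fin 4) t.castSucc)
      = (M (y 0) a * f a) * ∏ t : Fin n, M (y t.succ) (y t.castSucc) := by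
  rw [Fin.prod_univ_succ]
  have h0 : (Fin.cons a y : Fin (n+2) → Fin 4) 0 = a := rfl
  have hz : M ((Fin.cons a y : Fin (n+2) → Fin 4) (0 : Fin (n+1)).succ)
      ((Fin.cons a y : Fin (n+2) → Fin 4) (0 : Fin (n+1)).castSucc) = M (y 0) a := by
    rw [Fin.cons_succ, Fin.castSucc_zero, h0]
  have h1 : ∀ t : Fin n,
      M ((Fin.cons a y : Fin (n+2) → Fin 4) t.succ.succ)
          ((Fin.cons a y : Fin (n+2) → Fin 4) t.succ.castSucc)
        = M (y t.succ) (y t.castSucc) := fun t => by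
    rw [Fin.cons_succ, ← Fin.succ_castSucc, Fin.cons_succ]
  rw [h0, hz, Finset.prod_congr rfl fun t _ => h1 t]
  ring

lemma chain_one (M : Matrix (Fin 4) (Fin 4) ℝ) (hM : ∀ j, ∑ i, M i j = 1) (f : Fin 4 → ℝ) :
    ∀ n, ∑ x : Fin (n+1) → Fin 4, f (x 0) * ∏ t : Fin n, M (x t.succ) (x t.castSucc) = ∑ i, f i := by
  intro n
  induction n with
  | zero => simp [sum_cons4 0]
  | succ n ih =>
    rw [sum_snoc4, Finset.sum_comm]
    calc ∑ y : Fin (n+1) → Fin 4, ∑ a : Fin 4,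
          f ((Fin.snoc y a : Fin (n+2) → Fin 4) 0)
            * ∏ t : Fin (n+1), M ((Fin.snoc y a : Fin (n+2) → Fin 4) t.succ)
                ((Fin.snoc y a : Fin (n+2) → Fin 4) t.castSucc)
        = ∑ y : Fin (n+1) → Fin 4,
            f (y 0) * ∏ t : Fin n, M (y t.succ) (y t.castSucc) := by
          refine Finset.sum_congr rfl fun y _ => ?_
          rw [Finset.sum_congr rfl fun a _ => snoc_step n M f a y, ← Finset.mul_sum, hM, mul_one]
      _ = ∑ i, f i := ih

lemma chain_eig (Q : Matrix (Fin 4) (Fin 4) ℝ) (ρ : ℝ) (π : Fin 4 → ℝ)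
    (heig : ∀ i, ∑ j, (Q i j) ^ 2 * π j = ρ * π i) :
    ∀ n, ∑ x : Fin (n+1) → Fin 4, π (x 0) * ∏ t : Fin n, (Q (x t.succ) (x t.castSucc))^2
      = ρ ^ n * ∑ i, π i := by
  intro n
  induction n with
  | zero => simp [sum_cons4 0]
  | succ n ih =>
    rw [sum_cons4, Finset.sum_comm]
    calc ∑ y : Fin (n+1) → Fin 4, ∑ a : Fin 4,
          π ((Fin.cons a y : Fin (n+2) → Fin 4) 0)
            * ∏ t : Fin (n+1), ((fun i j => (Q i j)^2 : Matrix (Fin 4) (Fin 4) ℝ)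
                ((Fin.cons a y : Fin (n+2) → Fin 4) t.succ)
                ((Fin.cons a y : Fin (n+2) → Fin 4) t.castSucc))
        = ∑ y : Fin (n+1) → Fin 4,
            ρ * (π (y 0) * ∏ t : Fin n, (Q (y t.succ) (y t.castSucc))^2) := by
          refine Finset.sum_congr rfl fun y _ => ?_
          rw [Finset.sum_congr rfl fun a _ =>
            cons_step n (fun i j => (Q i j)^2 : Matrix (Fin 4) (Fin 4) ℝ) π a y]
          rw [← Finset.sum_mul]
          have : ∑ a : Fin 4, (Q (y 0) a)^2 * π a = ρ * π (y 0) := heig (y 0)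
          rw [this]; ring
      _ = ρ ^ (n+1) * ∑ i, π i := by rw [← Finset.mul_sum, ih]; ring

/-- periodic extension of a word of length `m+1` -/
def cyc (m : ℕ) (x : Fin (m+1) → Fin 4) (t : ℕ) : Fin 4 :=
  x ⟨t % (m+1), Nat.mod_lt _ m.succ_pos⟩

lemma cyc_add (m : ℕ) (x : Fin (m+1) → Fin 4) (t : ℕ) : cyc m x (m+1+t) = cyc m x t := by
  unfold cyc; congr 1; exact Fin.ext (Nat.add_mod_left (m+1) t)

lemma cyc_inj (m N : ℕ) (h : m + 1 ≤ N) :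
    Function.Injective (fun (x : Fin (m+1) → Fin 4) (t : Fin N) => cyc m x t.1) := by
  intro x y hxy
  funext j
  have h2 := congrFun hxy ⟨j.1, lt_of_lt_of_le j.2 h⟩
  have hj : (⟨j.1 % (m+1), Nat.mod_lt _ m.succ_pos⟩ : Fin (m+1)) = j :=
    Fin.ext (Nat.mod_eq_of_lt j.2)
  simpa [cyc, hj] using h2

lemma sum_comp_le {α β : Type*} [Fintype α] [Fintype β] {e : α → β}
    (he : Function.Injective e) {F : β → ℝ} (hF : ∀ b, 0 ≤ F b) :
    ∑ a, F (e a) ≤ ∑ b, F b := by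
  classical
  rw [← Finset.sum_image (f := F) (g := e) (fun x _ y _ h => he h)]
  exact Finset.sum_le_sum_of_subset_of_nonneg (Finset.subset_univ _) fun b _ _ => hF b

/-- the full-lap product -/
noncomputable def lap (Q : Matrix (Fin 4) (Fin 4) ℝ) (m : ℕ) (x : Fin (m+1) → Fin 4) : ℝ :=
  ∏ t ∈ Finset.range (m+1), Q (cyc m x (t+1)) (cyc m x t)

noncomputable def wk (Q : Matrix (Fin 4) (Fin 4) ℝ) (m n : ℕ) (x : Fin (m+1) → Fin 4) : ℝ :=
  ∏ t ∈ Finset.range n, Q (cyc m x (t+1)) (cyc m x t)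

noncomputable def wkb (Q : Matrix (Fin 4) (Fin 4) ℝ) (m n : ℕ) (x : Fin (m+1) → Fin 4) : ℝ :=
  ∏ t ∈ Finset.range n, (Q (cyc m x (t+1)) (cyc m x t))^2

lemma lapsum_le (Q : Matrix (Fin 4) (Fin 4) ℝ) (hQ0 : ∀ i j, 0 ≤ Q i j)
    (hcol : ∀ j, ∑ i, Q i j = 1) (p : Fin 4 → ℝ) (hp : ∀ i, 0 ≤ p i)
    (hpsum : ∑ i, p i = 1) (m : ℕ) :
    ∑ x : Fin (m+1) → Fin 4, p (cyc m x 0) * lap Q m x ≤ 1 := by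
  have hterm : ∀ x : Fin (m+1) → Fin 4,
      p (cyc m x 0) * lap Q m x
        = p ((fun (t : Fin (m+2)) => cyc m x t.1) 0)
            * ∏ t : Fin (m+1), Q ((fun (t : Fin (m+2)) => cyc m x t.1) t.succ)
                ((fun (t : Fin (m+2)) => cyc m x t.1) t.castSucc) := by
    intro x
    congr 1
    rw [lap, ← Fin.prod_univ_eq_prod_range (fun t => Q (cyc m x (t+1)) (cyc m x t)) (m+1)]
    rfl
  calc ∑ x : Fin (m+1) → Fin 4, p (cyc m x 0) * lap Q m x
      = ∑ x : Fin (m+1) → Fin 4,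
          (fun y : Fin (m+2) → Fin 4 => p (y 0) * ∏ t : Fin (m+1), Q (y t.succ) (y t.castSucc))
            ((fun (x : Fin (m+1) → Fin 4) (t : Fin (m+2)) => cyc m x t.1) x) :=
        Finset.sum_congr rfl fun x _ => hterm x
    _ ≤ ∑ y : Fin (m+2) → Fin 4, p (y 0) * ∏ t : Fin (m+1), Q (y t.succ) (y t.castSucc) := by
        refine sum_comp_le (e := fun (x : Fin (m+1) → Fin 4) (t : Fin (m+2)) => cyc m x t.1)
          (cyc_inj m (m+2) (by omega))
          (F := fun y : Fin (m+2) → Fin 4 => p (y 0) * ∏ t : Fin (m+1), Q (y t.succ) (y t.castSucc))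
          fun y => ?_
        exact mul_nonneg (hp _) (Finset.prod_nonneg fun t _ => hQ0 _ _)
    _ = 1 := by rw [chain_one Q hcol p (m+1), hpsum]

lemma wkbsum_le (Q : Matrix (Fin 4) (Fin 4) ℝ) (ρ : ℝ) (π : Fin 4 → ℝ) (hπ : ∀ i, 0 ≤ π i)
    (heig : ∀ i, ∑ j, (Q i j) ^ 2 * π j = ρ * π i)
    (p : Fin 4 → ℝ) (c0 : ℝ) (hc0 : 0 ≤ c0) (hpc : ∀ i, p i ≤ c0 * π i) (hp : ∀ i, 0 ≤ p i)
    (m n : ℕ) (hmn : m + 1 ≤ n + 1) :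
    ∑ x : Fin (m+1) → Fin 4, p (cyc m x 0) * wkb Q m n x ≤ c0 * (ρ^n * ∑ i, π i) := by
  have hWb : ∀ x : Fin (m+1) → Fin 4, 0 ≤ wkb Q m n x :=
    fun x => Finset.prod_nonneg fun t _ => sq_nonneg _
  calc ∑ x : Fin (m+1) → Fin 4, p (cyc m x 0) * wkb Q m n x
      ≤ ∑ x : Fin (m+1) → Fin 4, c0 * (π (cyc m x 0) * wkb Q m n x) := by
        refine Finset.sum_le_sum fun x _ => ?_
        rw [← mul_assoc]
        exact mul_le_mul_of_nonneg_right (hpc _) (hWb x)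
    _ = c0 * ∑ x : Fin (m+1) → Fin 4,
          (fun y : Fin (n+1) → Fin 4 => π (y 0) * ∏ t : Fin n, (Q (y t.succ) (y t.castSucc))^2)
            ((fun (x : Fin (m+1) → Fin 4) (t : Fin (n+1)) => cyc m x t.1) x) := by
        rw [← Finset.mul_sum]
        refine congrArg _ (Finset.sum_congr rfl fun x _ => ?_)
        congr 1
        rw [wkb, ← Fin.prod_univ_eq_prod_range (fun t => (Q (cyc m x (t+1)) (cyc m x t))^2) n]
        rfl
    _ ≤ c0 * ∑ y : Fin (n+1) → Fin 4, π (y 0) * ∏ t : Fin n, (Q (y t.succ) (y t.castSucc))^2 := by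
        refine mul_le_mul_of_nonneg_left ?_ hc0
        refine sum_comp_le (e := fun (x : Fin (m+1) → Fin 4) (t : Fin (n+1)) => cyc m x t.1)
          (cyc_inj m (n+1) hmn)
          (F := fun y : Fin (n+1) → Fin 4 => π (y 0) * ∏ t : Fin n, (Q (y t.succ) (y t.castSucc))^2)
          fun y => ?_
        exact mul_nonneg (hπ _) (Finset.prod_nonneg fun t _ => sq_nonneg _)
    _ = c0 * (ρ^n * ∑ i, π i) := by rw [chain_eig Q ρ π heig n]
theorem markov_overlapping_windows_equal_bound (Q : Matrix (Fin 4) (Fin 4) ℝ)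
    (hpos : ∀ i j, 0 < Q i j) (hcol : ∀ j, ∑ i, Q i j = 1)
    (p : Fin 4 → ℝ) (hp : ∀ i, 0 ≤ p i) (hpsum : ∑ i, p i = 1)
    (hstat : ∀ i, ∑ j, Q i j * p j = p i)
    (ρ : ℝ) (hρ : 0 < ρ) (hρ1 : ρ ≤ 1) (π : Fin 4 → ℝ) (hπ : ∀ i, 0 < π i)
    (heig : ∀ i, ∑ j, (Q i j) ^ 2 * π j = ρ * π i)
    (ℓ k : ℕ) (hk : 0 < k) (hkl : k < ℓ) :
    ∑ s : Fin (2 * ℓ - k) → Fin 4,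
        (p (s ⟨0, by omega⟩) *
            ∏ t : Fin (2 * ℓ - k - 1),
              Q (s ⟨t.1 + 1, by have := t.isLt; omega⟩)
                (s ⟨t.1, by have := t.isLt; omega⟩)) *
          (if ∀ i : Fin ℓ,
              s ⟨i.1, by have := i.isLt; omega⟩
                = s ⟨i.1 + (ℓ - k), by have := i.isLt; omega⟩
           then (1 : ℝ) else 0)
      ≤ Real.sqrt (⨆ i : Fin 4, (∑ j, π j) / (π i * ρ)) *
          Real.rpow ρ ((ℓ : ℝ) / 2) := by
  classical
  obtain ⟨n, hn⟩ : ∃ n, ℓ = n + 1 := ⟨ℓ - 1, by omega⟩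
  obtain ⟨m, hm⟩ : ∃ m, ℓ - k = m + 1 := ⟨ℓ - k - 1, by omega⟩
  have hN : 2 * ℓ - k = (m + 1) + (n + 1) := by omega
  have hN1 : 2 * ℓ - k - 1 = (m + 1) + n := by omega
  have hmn : m + 1 ≤ n + 1 := by omega
  set γ := ⨆ i : Fin 4, (∑ j, π j) / (π i * ρ) with hγdef
  have hγi : ∀ i, (∑ j, π j) / (π i * ρ) ≤ γ := by
    intro i
    rw [hγdef]
    exact le_ciSup (f := fun i : Fin 4 => (∑ j, π j) / (π i * ρ))
      (Set.Finite.bddAbove (Set.finite_range _)) i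
  have hπsum : 0 < ∑ j, π j :=
    Finset.sum_pos (fun i _ => hπ i) ⟨0, Finset.mem_univ 0⟩
  have hγ0 : 0 < γ := lt_of_lt_of_le (div_pos hπsum (mul_pos (hπ 0) hρ)) (hγi 0)
  have hq1 : ∀ i j, Q i j ≤ 1 := by
    intro i j
    calc Q i j ≤ ∑ i', Q i' j :=
          Finset.single_le_sum (fun i' _ => (hpos i' j).le) (Finset.mem_univ i)
      _ = 1 := hcol j
  have hp1 : ∀ i, p i ≤ 1 := by
    intro i
    calc p i ≤ ∑ i', p i' := Finset.single_le_sum (fun i' _ => hp i') (Finset.mem_univ i)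
      _ = 1 := hpsum
  -- notation for the statement's data
  set P : (Fin (2 * ℓ - k) → Fin 4) → Prop := fun s => ∀ i : Fin ℓ,
      s ⟨i.1, by have := i.isLt; omega⟩ = s ⟨i.1 + (ℓ - k), by have := i.isLt; omega⟩ with hPdef
  set F : (Fin (2 * ℓ - k) → Fin 4) → ℝ := fun s =>
      p (s ⟨0, by omega⟩) *
        ∏ t : Fin (2 * ℓ - k - 1),
          Q (s ⟨t.1 + 1, by have := t.isLt; omega⟩) (s ⟨t.1, by have := t.isLt; omega⟩) with hFdef
  have hF0 : ∀ s, 0 ≤ F s :=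
    fun s => mul_nonneg (hp _) (Finset.prod_nonneg fun t _ => (hpos _ _).le)
  set e : (Fin (m+1) → Fin 4) → (Fin (2 * ℓ - k) → Fin 4) :=
      fun x t => cyc m x t.1 with hedef
  have he : Function.Injective e := cyc_inj m (2 * ℓ - k) (by omega)
  have hcongr : ∀ (s : Fin (2 * ℓ - k) → Fin 4) (a b : ℕ) (ha : a < 2 * ℓ - k)
      (hb : b < 2 * ℓ - k), a = b → s ⟨a, ha⟩ = s ⟨b, hb⟩ := by
    intro s a b ha hb h; subst h; rfl
  -- periodic words agree with their cyclic extension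
  have per : ∀ (s : Fin (2 * ℓ - k) → Fin 4), P s → ∀ t (ht : t < 2 * ℓ - k),
      s ⟨t, ht⟩ = s ⟨t % (m+1), by have := Nat.mod_lt t (show 0 < m + 1 from Nat.succ_pos m); omega⟩ := by
    intro s hs t
    induction t using Nat.strong_induction_on with
    | _ t ih =>
      intro ht
      by_cases hlt : t < m + 1
      · exact hcongr s _ _ _ _ (Nat.mod_eq_of_lt hlt).symm
      · have h1 : t - (m+1) < ℓ := by omega
        have h2 := hs ⟨t - (m+1), h1⟩
        have e1 : s ⟨t, ht⟩ = s ⟨t - (m+1) + (ℓ - k), by omega⟩ :=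
          hcongr s _ _ _ _ (by omega)
        have e2 := ih (t - (m+1)) (by omega) (by omega)
        have e3 : s ⟨(t - (m+1)) % (m+1), by have := Nat.mod_lt (t-(m+1)) (show 0 < m + 1 from Nat.succ_pos m); omega⟩
            = s ⟨t % (m+1), by have := Nat.mod_lt t (show 0 < m + 1 from Nat.succ_pos m); omega⟩ :=
          hcongr s _ _ _ _ (Nat.mod_eq_sub_mod (by omega)).symm
        exact e1.trans (h2.symm.trans (e2.trans e3))
  -- the image description of periodic words
  have himg : Finset.univ.filter P = Finset.univ.image e := by
    ext s
    simp only [Finset.mem_filter, Finset.mem_univ, true_and, Finset.mem_image]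
    constructor
    · intro hs
      refine ⟨fun j => s ⟨j.1, by omega⟩, ?_⟩
      funext t
      have h1 : e (fun j : Fin (m+1) => s ⟨j.1, by omega⟩) t
          = s ⟨t.1 % (m+1), by have := Nat.mod_lt t.1 (show 0 < m + 1 from Nat.succ_pos m); omega⟩ := rfl
      rw [h1, ← per s hs t.1 t.2]
    · rintro ⟨x, -, rfl⟩
      intro i
      show cyc m x i.1 = cyc m x (i.1 + (ℓ - k))
      unfold cyc
      congr 1
      refine Fin.ext ?_
      show i.1 % (m+1) = (i.1 + (ℓ - k)) % (m+1)
      rw [hm, Nat.add_mod_right]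
  -- key reduction of the LHS
  have key : ∑ s : Fin (2 * ℓ - k) → Fin 4, F s * (if P s then (1 : ℝ) else 0)
      = ∑ x : Fin (m+1) → Fin 4, p (cyc m x 0) * (lap Q m x * wk Q m n x) := by
    have h1 : ∀ s, F s * (if P s then (1:ℝ) else 0) = if P s then F s else 0 := by
      intro s; by_cases h : P s <;> simp [h]
    rw [Finset.sum_congr rfl fun s _ => h1 s, ← Finset.sum_filter, himg,
      Finset.sum_image (fun x _ y _ h => he h)]
    refine Finset.sum_congr rfl fun x _ => ?_
    show p (cyc m x 0) * (∏ t : Fin (2 * ℓ - k - 1), Q (cyc m x (t.1+1)) (cyc m x t.1))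
        = p (cyc m x 0) * (lap Q m x * wk Q m n x)
    congr 1
    rw [Fin.prod_univ_eq_prod_range (fun t => Q (cyc m x (t+1)) (cyc m x t)) (2*ℓ-k-1),
      hN1, Finset.prod_range_add]
    congr 1
    refine Finset.prod_congr rfl fun t _ => ?_
    rw [show m + 1 + t + 1 = m + 1 + (t + 1) from by omega, cyc_add, cyc_add]
  -- nonnegativity facts
  have hlap0 : ∀ x : Fin (m+1) → Fin 4, 0 ≤ lap Q m x :=
    fun x => Finset.prod_nonneg fun t _ => (hpos _ _).le
  have hlap1 : ∀ x : Fin (m+1) → Fin 4, lap Q m x ≤ 1 :=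
    fun x => Finset.prod_le_one (fun t _ => (hpos _ _).le) (fun t _ => hq1 _ _)
  have hwk0 : ∀ x : Fin (m+1) → Fin 4, 0 ≤ wk Q m n x :=
    fun x => Finset.prod_nonneg fun t _ => (hpos _ _).le
  have hwkb0 : ∀ x : Fin (m+1) → Fin 4, 0 ≤ wkb Q m n x :=
    fun x => Finset.prod_nonneg fun t _ => sq_nonneg _
  have hpl0 : ∀ x : Fin (m+1) → Fin 4, 0 ≤ p (cyc m x 0) * lap Q m x :=
    fun x => mul_nonneg (hp _) (hlap0 x)
  -- Cauchy–Schwarz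
  have cs := Finset.sum_mul_sq_le_sq_mul_sq Finset.univ
    (fun x : Fin (m+1) → Fin 4 => Real.sqrt (p (cyc m x 0) * lap Q m x))
    (fun x : Fin (m+1) → Fin 4 => Real.sqrt (p (cyc m x 0) * lap Q m x) * wk Q m n x)
  have hfg : ∀ x : Fin (m+1) → Fin 4,
      Real.sqrt (p (cyc m x 0) * lap Q m x)
        * (Real.sqrt (p (cyc m x 0) * lap Q m x) * wk Q m n x)
      = p (cyc m x 0) * (lap Q m x * wk Q m n x) := by
    intro x
    rw [← mul_assoc, Real.mul_self_sqrt (hpl0 x), mul_assoc]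
  have hf2 : ∀ x : Fin (m+1) → Fin 4,
      (Real.sqrt (p (cyc m x 0) * lap Q m x))^2 = p (cyc m x 0) * lap Q m x :=
    fun x => Real.sq_sqrt (hpl0 x)
  have hg2 : ∀ x : Fin (m+1) → Fin 4,
      (Real.sqrt (p (cyc m x 0) * lap Q m x) * wk Q m n x)^2
        = p (cyc m x 0) * (lap Q m x * wkb Q m n x) := by
    intro x
    rw [mul_pow, Real.sq_sqrt (hpl0 x)]
    have : (wk Q m n x)^2 = wkb Q m n x := by
      rw [wk, wkb, ← Finset.prod_pow]
    rw [this, mul_assoc]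
  rw [Finset.sum_congr rfl fun x _ => hfg x, Finset.sum_congr rfl fun x _ => hf2 x,
    Finset.sum_congr rfl fun x _ => hg2 x] at cs
  -- bound the two factors
  have hA : ∑ x : Fin (m+1) → Fin 4, p (cyc m x 0) * lap Q m x ≤ 1 :=
    lapsum_le Q (fun i j => (hpos i j).le) hcol p hp hpsum m
  have hA0 : 0 ≤ ∑ x : Fin (m+1) → Fin 4, p (cyc m x 0) * lap Q m x :=
    Finset.sum_nonneg fun x _ => hpl0 x
  have hB : ∑ x : Fin (m+1) → Fin 4, p (cyc m x 0) * (lap Q m x * wkb Q m n x)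
      ≤ γ * ρ^(n+1) := by
    have step1 : ∑ x : Fin (m+1) → Fin 4, p (cyc m x 0) * (lap Q m x * wkb Q m n x)
        ≤ ∑ x : Fin (m+1) → Fin 4, p (cyc m x 0) * wkb Q m n x := by
      refine Finset.sum_le_sum fun x _ => ?_
      refine mul_le_mul_of_nonneg_left ?_ (hp _)
      exact mul_le_of_le_one_left (hwkb0 x) (hlap1 x)
    have hc0 : (0:ℝ) ≤ γ * ρ / ∑ j, π j :=
      le_of_lt (div_pos (mul_pos hγ0 hρ) hπsum)
    have hpc : ∀ i, p i ≤ (γ * ρ / ∑ j, π j) * π i := by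
      intro i
      have h := (div_le_iff₀ (mul_pos (hπ i) hρ)).mp (hγi i)
      calc p i ≤ 1 := hp1 i
        _ ≤ (γ * ρ / ∑ j, π j) * π i := by
            rw [div_mul_eq_mul_div, le_div_iff₀ hπsum, one_mul]
            nlinarith [h]
    have step2 := wkbsum_le Q ρ π (fun i => (hπ i).le) heig p (γ * ρ / ∑ j, π j)
      hc0 hpc hp m n hmn
    calc ∑ x : Fin (m+1) → Fin 4, p (cyc m x 0) * (lap Q m x * wkb Q m n x)
        ≤ ∑ x : Fin (m+1) → Fin 4, p (cyc m x 0) * wkb Q m n x := step1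
      _ ≤ (γ * ρ / ∑ j, π j) * (ρ^n * ∑ i, π i) := step2
      _ = γ * ρ^(n+1) := by field_simp; ring
  -- assemble
  have hS0 : 0 ≤ ∑ x : Fin (m+1) → Fin 4, p (cyc m x 0) * (lap Q m x * wk Q m n x) :=
    Finset.sum_nonneg fun x _ => mul_nonneg (hp _) (mul_nonneg (hlap0 x) (hwk0 x))
  have hsq : (∑ x : Fin (m+1) → Fin 4, p (cyc m x 0) * (lap Q m x * wk Q m n x))^2
      ≤ γ * ρ^(n+1) := by
    calc (∑ x : Fin (m+1) → Fin 4, p (cyc m x 0) * (lap Q m x * wk Q m n x))^2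
        ≤ (∑ x : Fin (m+1) → Fin 4, p (cyc m x 0) * lap Q m x)
            * ∑ x : Fin (m+1) → Fin 4, p (cyc m x 0) * (lap Q m x * wkb Q m n x) := cs
      _ ≤ 1 * (γ * ρ^(n+1)) := by
          refine mul_le_mul hA hB (Finset.sum_nonneg fun x _ =>
            mul_nonneg (hp _) (mul_nonneg (hlap0 x) (hwkb0 x))) zero_le_one
      _ = γ * ρ^(n+1) := one_mul _
  have hrpos : (0:ℝ) ≤ γ * ρ^(n+1) :=
    le_of_lt (mul_pos hγ0 (pow_pos hρ _))
  have hfinal : ∑ x : Fin (m+1) → Fin 4, p (cyc m x 0) * (lap Q m x * wk Q m n x)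
      ≤ Real.sqrt γ * Real.rpow ρ ((ℓ : ℝ) / 2) := by
    have h1 : ∑ x : Fin (m+1) → Fin 4, p (cyc m x 0) * (lap Q m x * wk Q m n x)
        ≤ Real.sqrt (γ * ρ^(n+1)) := (Real.le_sqrt hS0 hrpos).mpr hsq
    have h2 : Real.sqrt (γ * ρ^(n+1)) = Real.sqrt γ * Real.sqrt (ρ^(n+1)) :=
      Real.sqrt_mul hγ0.le _
    have h3 : Real.sqrt (ρ^(n+1)) = Real.rpow ρ ((ℓ : ℝ) / 2) := by
      rw [show ρ^(n+1) = ρ^ℓ from by rw [hn], Real.sqrt_eq_rpow, ← Real.rpow_natCast ρ ℓ,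
        ← Real.rpow_mul hρ.le]
      rw [show (ℓ:ℝ) * (1/2) = (ℓ:ℝ)/2 from by ring]
      rfl
    rw [h2, h3] at h1
    exact h1
  calc ∑ s : Fin (2 * ℓ - k) → Fin 4,
        (p (s ⟨0, by omega⟩) *
            ∏ t : Fin (2 * ℓ - k - 1),
              Q (s ⟨t.1 + 1, by have := t.isLt; omega⟩)
                (s ⟨t.1, by have := t.isLt; omega⟩)) *
          (if ∀ i : Fin ℓ,
              s ⟨i.1, by have := i.isLt; omega⟩
                = s ⟨i.1 + (ℓ - k), by have := i.isLt; omega⟩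
           then (1 : ℝ) else 0)
      = ∑ x : Fin (m+1) → Fin 4, p (cyc m x 0) * (lap Q m x * wk Q m n x) := key
    _ ≤ Real.sqrt γ * Real.rpow ρ ((ℓ : ℝ) / 2) := hfinal
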